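/- Let ℓ be a time-separation function on M and ∼ the equivalence relation x ∼ y iff max{ℓ(x,y), ℓ(y,x)} ≤ 0. On the quotient M̃ = M/∼, the function ℓ̃(x̃,ỹ) := inf{ℓ(x,y) : x ∈ x̃, y ∈ ỹ} is a time-separation function, i.e., it satisfies ℓ̃(x̃,x̃) ≤ 0 and the triangle inequality ℓ̃(x̃,z̃) ≤ ℓ̃(x̃,ỹ) + ℓ̃(ỹ,z̃) whenever both summands are finite. -/

import Mathlib

/-- the infimum of ℓ over equivalence classes defines a
time-separation function on the quotient M/∼. -/
theorem stmt4 {M : Type*} (ℓ : M → M → EReal)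
    (hrange : ∀ x y, ℓ x y ≤ 0 ∨ ℓ x y = ⊤)
    (hrefl : ∀ x, ℓ x x ≤ 0)
    (htri : ∀ x y z, ℓ x y < ⊤ → ℓ y z < ⊤ → ℓ x z ≤ ℓ x y + ℓ y z)
    (hequiv : Equivalence (fun x y : M => max (ℓ x y) (ℓ y x) ≤ 0)) :
    let S : Setoid M := ⟨fun x y => max (ℓ x y) (ℓ y x) ≤ 0, hequiv⟩
    let L : Quotient S → Quotient S → EReal := fun a b =>
      sInf {v | ∃ x y : M, a = Quotient.mk S x ∧ b = Quotient.mk S y ∧ v = ℓ x y}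
    (∀ a, L a a ≤ 0) ∧ (∀ a b, L a b ≤ 0 ∨ L a b = ⊤) ∧
    (∀ a b c, L a b < ⊤ → L b c < ⊤ → L a c ≤ L a b + L b c) := by
  intro S L
  refine ⟨?_, ?_, ?_⟩
  · intro a
    obtain ⟨x, rfl⟩ := Quotient.exists_rep a
    exact le_trans (sInf_le ⟨x, x, rfl, rfl, rfl⟩) (hrefl x)
  · intro a b
    by_cases h : L a b = ⊤
    · exact Or.inr h
    · left
      obtain ⟨u, ⟨x, y, hax, hby, rfl⟩, hu⟩ :=
        sInf_lt_iff.mp (lt_of_le_of_ne le_top h)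
      rcases hrange x y with h0 | h0
      · exact le_trans (sInf_le ⟨x, y, hax, hby, rfl⟩) h0
      · exact absurd h0 hu.ne
  · intro a b c hab hbc
    apply EReal.le_add_of_forall_gt (Or.inr hbc.ne) (Or.inl hab.ne)
    intro a' ha' b' hb'
    rcases eq_or_lt_of_le (le_top : a' ≤ ⊤) with rfl | ha't
    · rw [EReal.top_add_of_ne_bot (ne_bot_of_gt hb')]; exact le_top
    rcases eq_or_lt_of_le (le_top : b' ≤ ⊤) with rfl | hb't
    · rw [EReal.add_top_of_ne_bot (ne_bot_of_gt ha')]; exact le_top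
    obtain ⟨u, ⟨x, y, hax, hby, rfl⟩, hu⟩ := sInf_lt_iff.mp ha'
    obtain ⟨v, ⟨y', z, hby', hcz, rfl⟩, hv⟩ := sInf_lt_iff.mp hb'
    have h1 : ℓ x y ≤ 0 := by
      rcases hrange x y with h0 | h0
      · exact h0
      · exact absurd h0 (hu.trans ha't).ne
    have h2 : ℓ y' z ≤ 0 := by
      rcases hrange y' z with h0 | h0
      · exact h0
      · exact absurd h0 (hv.trans hb't).ne
    have hyy' : max (ℓ y y') (ℓ y' y) ≤ 0 := Quotient.exact (hby.symm.trans hby')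
    have hyy1 : ℓ y y' ≤ 0 := le_trans (le_max_left _ _) hyy'
    have hlt : (0 : EReal) < ⊤ := by norm_num
    have hxy' : ℓ x y' ≤ ℓ x y := by
      calc ℓ x y' ≤ ℓ x y + ℓ y y' :=
            htri x y y' (h1.trans_lt hlt) (hyy1.trans_lt hlt)
        _ ≤ ℓ x y + 0 := add_le_add_right hyy1 _
        _ = ℓ x y := add_zero _
    have hxz : ℓ x z ≤ ℓ x y + ℓ y' z :=
      le_trans (htri x y' z (lt_of_le_of_lt (hxy'.trans h1) hlt) (h2.trans_lt hlt))
        (add_le_add_left hxy' _)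
    calc L a c ≤ ℓ x z := sInf_le ⟨x, z, hax, hcz, rfl⟩
      _ ≤ ℓ x y + ℓ y' z := hxz
      _ ≤ a' + b' := add_le_add hu.le hv.le
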